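/- arXiv:2003.08995 — 9 statements merged into one kernel-verified Lean document; each statement's English description precedes it below -/
import Mathlib

section
/- Let 0 < m ≤ 1, n > 0, and λ ∈ ℝ. Assume that one of the following holds: (i) λ > −1 and n = m + 1; (ii) λ ≥ 0 and n ≥ 1; (iii) 0 < λ < 1 and n = m; (iv) λ ≤ 0 and n ≤ 1. Then (1−m)·s^m + m·s^(m+1) + λ·(n−1)·s^n > 0 for every s > 0. -/
theorem stmt_4 (m n lam : ℝ) (hm1 : 0 < m) (hm2 : m ≤ 1) (hn : 0 < n)
    (hcase : (lam > -1 ∧ n = m + 1) ∨ (lam ≥ 0 ∧ n ≥ 1) ∨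
      (0 < lam ∧ lam < 1 ∧ n = m) ∨ (lam ≤ 0 ∧ n ≤ 1)) :
    ∀ s > (0 : ℝ), (1 - m) * s ^ m + m * s ^ (m + 1) + lam * (n - 1) * s ^ n > 0 := by
  intro s hs
  have hsm : (0:ℝ) < s ^ m := Real.rpow_pos_of_pos hs m
  have hsm1 : (0:ℝ) < s ^ (m + 1) := Real.rpow_pos_of_pos hs (m + 1)
  have hsn : (0:ℝ) < s ^ n := Real.rpow_pos_of_pos hs n
  rcases hcase with ⟨h1, h2⟩ | ⟨h1, h2⟩ | ⟨h1, h2, h3⟩ | ⟨h1, h2⟩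
  · subst h2
    nlinarith [mul_nonneg (by linarith : (0:ℝ) ≤ 1 - m) hsm.le,
      mul_pos (mul_pos hm1 (by linarith : (0:ℝ) < 1 + lam)) hsm1]
  · nlinarith [mul_nonneg (mul_nonneg h1 (by linarith : (0:ℝ) ≤ n - 1)) hsn.le]
  · subst h3
    nlinarith [mul_nonneg (mul_nonneg (by linarith : (0:ℝ) ≤ 1 - lam) (by linarith : (0:ℝ) ≤ 1 - n)) hsn.le,
      mul_pos hm1 hsm1]
  · nlinarith [mul_nonneg (mul_nonneg (neg_nonneg.2 h1) (by linarith : (0:ℝ) ≤ 1 - n)) hsn.le, mul_pos hm1 hsm1, mul_nonneg (by linarith : (0:ℝ) ≤ 1 - m) hsm.le]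
end

section
/- Let 0 < n < m < 1 and λ > 0. If there exists M > 0 such that M^m − M^(m+1) − λ·M^n ≥ 0, then λ ≤ (m−n)^(m−n)/(m−n+1)^(m−n+1). -/
lemma key_max (p M : ℝ) (hp0 : 0 < p) (hp1 : p ≤ 1) (hM : 0 < M) :
    M ^ p * (1 - M) ≤ p ^ p / (p + 1) ^ (p + 1) := by
  have hp1' : (0:ℝ) < p + 1 := by linarith
  set c : ℝ := p / (p + 1) with hc
  have hc0 : 0 < c := div_pos hp0 hp1'
  have hc1 : c < 1 := (div_lt_one hp1').mpr (by linarith)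
  have hRHS : p ^ p / (p + 1) ^ (p + 1) = c ^ p * (1 - c) := by
    rw [Real.rpow_add hp1', Real.rpow_one, Real.div_rpow hp0.le hp1'.le]
    field_simp [hc]
    rw [hc, mul_sub, mul_one, mul_div_assoc', mul_div_cancel_left₀ p hp1'.ne']; ring
  rw [hRHS]
  have hRpos : 0 < c ^ p * (1 - c) :=
    mul_pos (Real.rpow_pos_of_pos hc0 p) (by linarith)
  rcases le_or_gt 1 M with hM1 | hM1
  · have : M ^ p * (1 - M) ≤ 0 :=
      mul_nonpos_of_nonneg_of_nonpos (Real.rpow_nonneg hM.le p) (by linarith)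
    linarith
  · -- M < 1 case: Bernoulli with x = M/c
    set x : ℝ := M / c with hx
    have hx0 : 0 < x := div_pos hM hc0
    have hMx : M = c * x := by rw [hx]; field_simp
    have hbern : x ^ p ≤ 1 + p * (x - 1) := by
      have := rpow_one_add_le_one_add_mul_self (s := x - 1) (by linarith) hp0.le hp1
      simpa using this
    have hMp : M ^ p = c ^ p * x ^ p := by
      rw [hMx, Real.mul_rpow hc0.le hx0.le]
    rw [hMp, hMx]
    have h1M : (0:ℝ) < 1 - c * x := by rw [← hMx]; linarith
    have step : x ^ p * (1 - c * x) ≤ (1 + p * (x - 1)) * (1 - c * x) :=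
      mul_le_mul_of_nonneg_right hbern h1M.le
    have alg : (1 + p * (x - 1)) * (1 - c * x) ≤ 1 - c := by
      have hkey : (1 + p * (x - 1)) * (1 - c * x) - (1 - c) = -(p * c * (x - 1) ^ 2) := by
        have : c * (p + 1) = p := by rw [hc]; field_simp
        nlinarith [this]
      nlinarith [sq_nonneg (x - 1), mul_pos hp0 hc0]
    calc c ^ p * x ^ p * (1 - c * x) = c ^ p * (x ^ p * (1 - c * x)) := by ring
      _ ≤ c ^ p * ((1 + p * (x - 1)) * (1 - c * x)) := by
          exact mul_le_mul_of_nonneg_left step (Real.rpow_nonneg hc0.le p)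
      _ ≤ c ^ p * (1 - c) :=
          mul_le_mul_of_nonneg_left alg (Real.rpow_nonneg hc0.le p)

theorem stmt_8 (m n lam : ℝ) (hn : 0 < n) (hnm : n < m) (hm : m < 1) (hlam : 0 < lam)
    (h : ∃ M > (0 : ℝ), M ^ m - M ^ (m + 1) - lam * M ^ n ≥ 0) :
    lam ≤ (m - n) ^ (m - n) / (m - n + 1) ^ (m - n + 1) := by
  obtain ⟨M, hM, hineq⟩ := h
  have hMn : (0:ℝ) < M ^ n := Real.rpow_pos_of_pos hM n
  have hlamle : lam ≤ M ^ (m - n) * (1 - M) := by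
    have hsplit : M ^ m = M ^ (m - n) * M ^ n := by
      rw [← Real.rpow_add hM]; ring_nf
    have hsplit1 : M ^ (m + 1) = M ^ (m - n) * M * M ^ n := by
      rw [show m + 1 = (m - n) + 1 + n by ring, Real.rpow_add hM, Real.rpow_add hM,
        Real.rpow_one]
    have : lam * M ^ n ≤ (M ^ (m - n) * (1 - M)) * M ^ n := by
      have := hineq
      rw [hsplit, hsplit1] at this
      nlinarith
    exact le_of_mul_le_mul_right this hMn
  have := key_max (m - n) M (by linarith) (by linarith) hM
  linarith
end

section
/- Let N ≥ 1 be an integer, let 0 < n < m < 1, and let θ ∈ (0,1) satisfy 1/(m+1) = (1−θ)·(1/2 − 1/N) + θ/(n+1). Then n < ((N+2)(2m−1) − (N−2)m²)/4 if and only if m + 1 > ((n+1)/θ)·(2/(m+1) − 1 + θ). -/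
theorem stmt_9 (N : ℕ) (hN : 1 ≤ N) (m n θ : ℝ) (hn : 0 < n) (hnm : n < m) (hm : m < 1)
    (hθ1 : 0 < θ) (hθ2 : θ < 1)
    (hθ : 1 / (m + 1) = (1 - θ) * (1 / 2 - 1 / (N : ℝ)) + θ / (n + 1)) :
    n < (((N : ℝ) + 2) * (2 * m - 1) - ((N : ℝ) - 2) * m ^ 2) / 4 ↔
      m + 1 > ((n + 1) / θ) * (2 / (m + 1) - 1 + θ) := by
  have hNpos : (0:ℝ) < N := by exact_mod_cast hN
  have hm1 : (0:ℝ) < m + 1 := by linarith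
  have hn1 : (0:ℝ) < n + 1 := by linarith
  have hD : (0:ℝ) < (N:ℝ) + 2 - ((N:ℝ) - 2) * n := by nlinarith
  have hne : (N:ℝ) ≠ 0 := ne_of_gt hNpos
  field_simp at hθ
  have hkey : θ * (m+1) * ((N:ℝ) + 2 - ((N:ℝ) - 2) * n) = (n+1) * ((N:ℝ) + 2 - ((N:ℝ) - 2) * m) := by
    nlinarith [hθ, hm1, hn1]
  rw [gt_iff_lt, show ((n+1)/θ)*(2/(m+1)-1+θ) = ((n+1)*(2 - (m+1) + (m+1)*θ))/(θ*(m+1)) from by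
    field_simp, div_lt_iff₀ (by positivity), lt_div_iff₀ (by norm_num : (0:ℝ) < 4)]
  constructor
  · intro h
    nlinarith [hkey, mul_pos hn1 hD, mul_pos (mul_pos hθ1 hm1) hD, h, mul_pos hn1 (sub_pos.mpr hnm)]
  · intro h
    nlinarith [hkey, hD, mul_pos hn1 hD, h, mul_pos (mul_pos hθ1 hm1) (sub_pos.mpr hnm)]
end

section
/- Let 0 < m < 1 < n < m + 1 and A₁, A₂, A₃ > 0. Set λ̲ = −(n−1)^((n−1)/(1−m))·(1−m) / (2^((n−m)/(1−m))·(n−m)^((n−m)/(1−m))·A₁^((n−1)/(1−m))·A₂), λ̄ = −m·A₃^((n−1)/m) / (2^((m+1−n)/m)·(n−1)^((n−1)/m)·(m+1−n)^((m+1−n)/m)·A₂), s_λ = ((1−m)/(−2λ(n−m)A₂))^(1/(n−1)) and ŝ_λ = (−λ(n−1)A₂/(m·A₃))^(1/(m+1−n)). If A₁^(1/(1−m))·A₃^(1/m) < C̃, where C̃ = ((n−1)/2)^(1/(m(1−m)))·((1−m)/m)^(1/(n−1))·(m+1−n)^((m+1−n)/(m(n−1))) / (n−m)^((n−m)/((1−m)(n−1))),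 then λ̲ < λ̄ and s_{λ̲} < ŝ_{λ̄}. -/
set_option maxHeartbeats 1000000
theorem stmt_14 (m n A₁ A₂ A₃ : ℝ) (hm1 : 0 < m) (hm2 : m < 1) (hn1 : 1 < n)
    (hn2 : n < m + 1) (hA₁ : 0 < A₁) (hA₂ : 0 < A₂) (hA₃ : 0 < A₃)
    (hsmall : A₁ ^ (1 / (1 - m)) * A₃ ^ (1 / m) <
      ((n - 1) / 2) ^ (1 / (m * (1 - m))) * ((1 - m) / m) ^ (1 / (n - 1)) *
        (m + 1 - n) ^ ((m + 1 - n) / (m * (n - 1))) / (n - m) ^ ((n - m) / ((1 - m) * (n - 1)))) :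
    let lamLow : ℝ := -((n - 1) ^ ((n - 1) / (1 - m)) * (1 - m)) /
      (2 ^ ((n - m) / (1 - m)) * (n - m) ^ ((n - m) / (1 - m)) * A₁ ^ ((n - 1) / (1 - m)) * A₂)
    let lamHigh : ℝ := -(m * A₃ ^ ((n - 1) / m)) /
      (2 ^ ((m + 1 - n) / m) * (n - 1) ^ ((n - 1) / m) * (m + 1 - n) ^ ((m + 1 - n) / m) * A₂)
    lamLow < lamHigh ∧
      ((1 - m) / (-2 * lamLow * (n - m) * A₂)) ^ (1 / (n - 1)) <
        (-lamHigh * (n - 1) * A₂ / (m * A₃)) ^ (1 / (m + 1 - n)) := by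
  intro lamLow lamHigh
  have hB : 0 < 1 - m := by linarith
  have hC : 0 < n - 1 := by linarith
  have hD : 0 < m + 1 - n := by linarith
  have hE : 0 < n - m := by linarith
  have hm0 : m ≠ 0 := ne_of_gt hm1
  have hB0 : (1 - m) ≠ 0 := ne_of_gt hB
  have hC0 : (n - 1) ≠ 0 := ne_of_gt hC
  have hD0 : (m + 1 - n) ≠ 0 := ne_of_gt hD
  have hE0 : (n - m) ≠ 0 := ne_of_gt hE
  have H := Real.log_lt_log (by positivity) hsmall
  simp (disch := positivity) only [Real.log_mul, Real.log_div, Real.log_rpow] at H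
  set N1 : ℝ := (n - 1) ^ ((n - 1) / (1 - m)) * (1 - m) with hN1def
  set D1 : ℝ := 2 ^ ((n - m) / (1 - m)) * (n - m) ^ ((n - m) / (1 - m)) * A₁ ^ ((n - 1) / (1 - m)) * A₂ with hD1def
  set N2 : ℝ := m * A₃ ^ ((n - 1) / m) with hN2def
  set D2 : ℝ := 2 ^ ((m + 1 - n) / m) * (n - 1) ^ ((n - 1) / m) * (m + 1 - n) ^ ((m + 1 - n) / m) * A₂ with hD2def
  have hN1 : 0 < N1 := by rw [hN1def]; positivity
  have hD1 : 0 < D1 := by rw [hD1def]; positivity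
  have hN2 : 0 < N2 := by rw [hN2def]; positivity
  have hD2 : 0 < D2 := by rw [hD2def]; positivity
  have key : N2 * D1 < N1 * D2 := by
    rw [← Real.log_lt_log_iff (by positivity) (by positivity)]
    rw [hN1def, hD1def, hN2def, hD2def]
    simp (disch := positivity) only [Real.log_mul, Real.log_div, Real.log_rpow]
    rw [← sub_pos]
    have h9 : 0 < (n - 1) *
        ((1 / (m * (1 - m)) * (Real.log (n - 1) - Real.log 2) +
          1 / (n - 1) * (Real.log (1 - m) - Real.log m) +
          (m + 1 - n) / (m * (n - 1)) * Real.log (m + 1 - n) -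
          (n - m) / ((1 - m) * (n - 1)) * Real.log (n - m)) -
         (1 / (1 - m) * Real.log A₁ + 1 / m * Real.log A₃)) :=
      mul_pos hC (sub_pos.2 H)
    exact lt_of_lt_of_eq h9 (by field_simp; ring)
  constructor
  · show -N1 / D1 < -N2 / D2
    rw [div_lt_div_iff₀ hD1 hD2, neg_mul, neg_mul, neg_lt_neg_iff]
    exact key
  · have h3 : Real.log (1 - m) + Real.log (m + 1 - n) < Real.log m + Real.log (n - m) := by
      have h3' : Real.log ((1 - m) * (m + 1 - n)) < Real.log (m * (n - m)) :=
        Real.log_lt_log (by positivity) (by nlinarith)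
      rwa [Real.log_mul hB0 hD0, Real.log_mul hm0 hE0] at h3'
    have hlam : lamLow = -N1 / D1 := rfl
    have hlam2 : lamHigh = -N2 / D2 := rfl
    have hX : (1 - m) / (-2 * lamLow * (n - m) * A₂) = (1 - m) * D1 / (2 * N1 * ((n - m) * A₂)) := by
      rw [hlam]; field_simp
    have hY : -lamHigh * (n - 1) * A₂ / (m * A₃) = N2 * ((n - 1) * A₂) / (D2 * (m * A₃)) := by
      rw [hlam2]; field_simp
    rw [hX, hY]
    rw [← Real.log_lt_log_iff (by positivity) (by positivity)]
    rw [hN1def, hD1def, hN2def, hD2def]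
    simp (disch := positivity) only [Real.log_mul, Real.log_div, Real.log_rpow]
    rw [← sub_pos]
    have h9 : 0 < ((1 / (m * (1 - m)) * (Real.log (n - 1) - Real.log 2) +
          1 / (n - 1) * (Real.log (1 - m) - Real.log m) +
          (m + 1 - n) / (m * (n - 1)) * Real.log (m + 1 - n) -
          (n - m) / ((1 - m) * (n - 1)) * Real.log (n - m)) -
         (1 / (1 - m) * Real.log A₁ + 1 / m * Real.log A₃)) +
        1 / (n - 1) * ((Real.log m + Real.log (n - m)) -
          (Real.log (1 - m) + Real.log (m + 1 - n))) :=
      add_pos (sub_pos.2 H) (mul_pos (by positivity) (sub_pos.2 h3))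
    exact lt_of_lt_of_eq h9 (by field_simp; ring)
end

section
/- Let 0 < m < 1, a > 0, and λ < −1 − a^(1/(1−m))·(1−m)·m^(m/(1−m)). Then a·s^(1−m) + (λ+1)·s − 1 < 0 for every s > 0. -/
theorem stmt_15 (m a lam : ℝ) (hm1 : 0 < m) (hm2 : m < 1) (ha : 0 < a)
    (hlam : lam < -1 - a ^ (1 / (1 - m)) * (1 - m) * m ^ (m / (1 - m))) :
    ∀ s > (0 : ℝ), a * s ^ (1 - m) + (lam + 1) * s - 1 < 0 := by
  intro s hs
  have hb : (0:ℝ) < 1 - m := by linarith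
  set T : ℝ := a ^ (1 / (1 - m)) * (1 - m) * m ^ (m / (1 - m)) with hT
  set x : ℝ := a ^ (1 / (1 - m)) * m ^ (m / (1 - m)) * s with hx
  have hxpos : 0 < x := by positivity
  have h := Real.geom_mean_le_arith_mean2_weighted hb.le hm1.le hxpos.le
    (by positivity : (0:ℝ) ≤ 1 / m) (by ring)
  have lhs_eq : x ^ (1 - m) * (1 / m) ^ m = a * s ^ (1 - m) := by
    have h1 : ((1:ℝ)/(1-m)) * (1-m) = 1 := by field_simp
    have h2 : (m/(1-m)) * (1-m) = m := by field_simp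
    have hmm : (0:ℝ) < m ^ m := Real.rpow_pos_of_pos hm1 m
    rw [hx, Real.mul_rpow (by positivity) hs.le,
      Real.mul_rpow (by positivity) (by positivity),
      ← Real.rpow_mul ha.le, ← Real.rpow_mul hm1.le, h1, h2, Real.rpow_one,
      one_div, Real.inv_rpow hm1.le]
    field_simp
  have key : a * s ^ (1 - m) ≤ T * s + 1 := by
    calc a * s ^ (1-m) = x ^ (1-m) * (1/m) ^ m := lhs_eq.symm
      _ ≤ (1-m) * x + m * (1/m) := h
      _ = T * s + 1 := by rw [hx, hT]; field_simp
  nlinarith [mul_pos hs (show 0 < -(T + lam + 1) by linarith)]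
end

section
/- Let 0 < n < 1, 0 < a < 1, and λ > (a^(2−n)·(1−n)^(1−n))/(2−n)^(2−n). Then −a·s^(1−n) + s^(2−n) + λ > 0 for every s > 0. -/
lemma key_amgm (p a s : ℝ) (hp : 0 < p) (ha : 0 < a) (hs : 0 < s) (hsa : s < a) :
    s ^ p * (a - s) ≤ a ^ (p + 1) * p ^ p / (p + 1) ^ (p + 1) := by
  have hp1 : (0:ℝ) < p + 1 := by linarith
  have hw1 : (0:ℝ) ≤ p / (p + 1) := by positivity
  have hw2 : (0:ℝ) ≤ 1 / (p + 1) := by positivity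
  have hsum : p / (p + 1) + 1 / (p + 1) = 1 := by field_simp
  set x := s * (p + 1) / p with hx
  set y := (a - s) * (p + 1) with hy
  have hx0 : 0 ≤ x := by positivity
  have hy0 : 0 ≤ y := by
    have : 0 ≤ a - s := by linarith
    positivity
  have H := Real.geom_mean_le_arith_mean2_weighted hw1 hw2 hx0 hy0 hsum
  have hRHS : p / (p + 1) * x + 1 / (p + 1) * y = a := by
    field_simp [hx, hy]; rw [hx, hy]; field_simp; ring
  rw [hRHS] at H
  have H2 := Real.rpow_le_rpow (by positivity) H hp1.le
  have hxp : (x ^ (p / (p + 1)) * y ^ (1 / (p + 1))) ^ (p + 1) = x ^ p * y := by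
    rw [Real.mul_rpow (Real.rpow_nonneg hx0 _) (Real.rpow_nonneg hy0 _),
      ← Real.rpow_mul hx0, ← Real.rpow_mul hy0]
    have e1 : p / (p + 1) * (p + 1) = p := by field_simp
    have e2 : 1 / (p + 1) * (p + 1) = 1 := by field_simp
    rw [e1, e2, Real.rpow_one]
  rw [hxp] at H2
  have hxpow : x ^ p = s ^ p * (p + 1) ^ p / p ^ p := by
    rw [hx, Real.div_rpow (by positivity) hp.le, Real.mul_rpow hs.le hp1.le]
  rw [hxpow, hy] at H2
  have hq : (p + 1) ^ (p + 1) = (p + 1) ^ p * (p + 1) := by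
    rw [Real.rpow_add hp1, Real.rpow_one]
  have hPp : (0:ℝ) < p ^ p := Real.rpow_pos_of_pos hp _
  have hQp : (0:ℝ) < (p + 1) ^ p := Real.rpow_pos_of_pos hp1 _
  rw [div_mul_eq_mul_div, div_le_iff₀ hPp] at H2
  rw [hq, le_div_iff₀ (by positivity)]
  nlinarith [H2]

theorem stmt_16 (n a lam : ℝ) (hn1 : 0 < n) (hn2 : n < 1) (ha1 : 0 < a) (ha2 : a < 1)
    (hlam : lam > a ^ (2 - n) * (1 - n) ^ (1 - n) / (2 - n) ^ (2 - n)) :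
    ∀ s > (0 : ℝ), -a * s ^ (1 - n) + s ^ (2 - n) + lam > 0 := by
  intro s hs
  have hp : (0:ℝ) < 1 - n := by linarith
  have hM : (0:ℝ) < a ^ (2 - n) * (1 - n) ^ (1 - n) / (2 - n) ^ (2 - n) := by
    have h1 : (0:ℝ) < a ^ (2 - n) := Real.rpow_pos_of_pos ha1 _
    have h2 : (0:ℝ) < (1 - n) ^ (1 - n) := Real.rpow_pos_of_pos hp _
    have h3 : (0:ℝ) < (2 - n) ^ (2 - n) := Real.rpow_pos_of_pos (by linarith) _
    positivity
  have hsplit : s ^ (2 - n) = s ^ (1 - n) * s := by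
    have : (2:ℝ) - n = (1 - n) + 1 := by ring
    rw [this, Real.rpow_add hs, Real.rpow_one]
  rw [hsplit]
  have hkey : s ^ (1 - n) * (a - s) ≤ a ^ (2 - n) * (1 - n) ^ (1 - n) / (2 - n) ^ (2 - n) := by
    rcases lt_or_ge s a with hsa | hsa
    · have := key_amgm (1 - n) a s hp ha1 hs hsa
      have h21 : (1 - n) + 1 = 2 - n := by ring
      rwa [h21] at this
    · have h1 : s ^ (1 - n) * (a - s) ≤ 0 :=
        mul_nonpos_of_nonneg_of_nonpos (Real.rpow_nonneg hs.le _) (by linarith)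
      linarith
  nlinarith [hkey, hlam]
end

section
/- Let 1 < n < 2, b > 0, and let λ satisfy −b^(2−n)/((n−1)^(n−1)·(2−n)^(2−n)) < λ < 0. Then b + s + λ·s^(n−1) > 0 for every s > 0. -/
theorem stmt_17 (n b lam : ℝ) (hn1 : 1 < n) (hn2 : n < 2) (hb : 0 < b)
    (hlam1 : -(b ^ (2 - n)) / ((n - 1) ^ (n - 1) * (2 - n) ^ (2 - n)) < lam) (hlam2 : lam < 0) :
    ∀ s > (0 : ℝ), b + s + lam * s ^ (n - 1) > 0 := by
  intro s hs
  have h1 : (0:ℝ) < n - 1 := by linarith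
  have h2 : (0:ℝ) < 2 - n := by linarith
  have hC : (0:ℝ) < (n - 1) ^ (n - 1) * (2 - n) ^ (2 - n) :=
    mul_pos (Real.rpow_pos_of_pos h1 _) (Real.rpow_pos_of_pos h2 _)
  have hsp : (0:ℝ) < s ^ (n - 1) := Real.rpow_pos_of_pos hs _
  -- weighted AM-GM
  have hgm := Real.geom_mean_le_arith_mean2_weighted h1.le h2.le
    (div_nonneg hs.le h1.le) (div_nonneg hb.le h2.le) (by ring)
  have e1 : (s / (n - 1)) ^ (n - 1) = s ^ (n - 1) / (n - 1) ^ (n - 1) :=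
    Real.div_rpow hs.le h1.le _
  have e2 : (b / (2 - n)) ^ (2 - n) = b ^ (2 - n) / (2 - n) ^ (2 - n) :=
    Real.div_rpow hb.le h2.le _
  rw [e1, e2] at hgm
  have hR : (n - 1) * (s / (n - 1)) + (2 - n) * (b / (2 - n)) = s + b := by
    field_simp
  rw [hR] at hgm
  -- hgm : s ^ (n-1) / (n-1)^(n-1) * (b^(2-n) / (2-n)^(2-n)) ≤ s + b
  have hgm2 : s ^ (n - 1) * b ^ (2 - n) ≤ (s + b) * ((n - 1) ^ (n - 1) * (2 - n) ^ (2 - n)) := by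
    rw [div_mul_div_comm] at hgm
    calc s ^ (n - 1) * b ^ (2 - n)
        = s ^ (n - 1) * b ^ (2 - n) / ((n - 1) ^ (n - 1) * (2 - n) ^ (2 - n)) *
            ((n - 1) ^ (n - 1) * (2 - n) ^ (2 - n)) := by field_simp
      _ ≤ _ := by exact mul_le_mul_of_nonneg_right hgm hC.le
  have hlam' : -lam * ((n - 1) ^ (n - 1) * (2 - n) ^ (2 - n)) < b ^ (2 - n) := by
    rw [div_lt_iff₀ hC] at hlam1
    nlinarith
  have key : -lam * s ^ (n - 1) < b + s := by
    have := mul_lt_mul_of_pos_left hlam' hsp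
    nlinarith
  nlinarith
end

section
/- Let n > 2, a > 0, and λ < −(n−2)^(n−2)/((n−1)^(n−1)·a^(n−2)). Then −a + s + λ·s^(n−1) < 0 for every s > 0. -/
theorem stmt_18 (n a lam : ℝ) (hn : 2 < n) (ha : 0 < a)
    (hlam : lam < -((n - 2) ^ (n - 2)) / ((n - 1) ^ (n - 1) * a ^ (n - 2))) :
    ∀ s > (0 : ℝ), -a + s + lam * s ^ (n - 1) < 0 := by
  intro s hs
  have h2 : (0:ℝ) < n - 2 := by linarith
  have h1 : (0:ℝ) < n - 1 := by linarith
  set c : ℝ := (n - 2) ^ (n - 2) / ((n - 1) ^ (n - 1) * a ^ (n - 2)) with hc_def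
  have hc : 0 < c := by
    apply div_pos (Real.rpow_pos_of_pos h2 _)
    exact mul_pos (Real.rpow_pos_of_pos h1 _) (Real.rpow_pos_of_pos ha _)
  have hsp : (0:ℝ) < s ^ (n - 1) := Real.rpow_pos_of_pos hs _
  -- key inequality: s ≤ a + c * s^(n-1)
  set B : ℝ := (n - 2) / ((n - 1) * a) with hB_def
  have hB : 0 < B := div_pos h2 (mul_pos h1 ha)
  have hBc : (n - 1) * c = B ^ (n - 2) := by
    rw [hB_def, Real.div_rpow h2.le (mul_pos h1 ha).le,
      Real.mul_rpow h1.le ha.le, hc_def]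
    have hpow := Real.rpow_add_one h1.ne' (n - 2)
    rw [show n - 2 + 1 = n - 1 by ring] at hpow
    rw [hpow]
    field_simp
  have key : s ≤ a + c * s ^ (n - 1) := by
    have hgm := Real.geom_mean_le_arith_mean2_weighted
      (w₁ := (n - 2) / (n - 1)) (w₂ := 1 / (n - 1))
      (p₁ := B⁻¹) (p₂ := (n - 1) * c * s ^ (n - 1))
      (by positivity) (by positivity) (by positivity)
      (by positivity) (by field_simp; ring)
    have hL : B⁻¹ ^ ((n - 2) / (n - 1)) * ((n - 1) * c * s ^ (n - 1)) ^ (1 / (n - 1)) = s := by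
      rw [hBc, Real.mul_rpow (Real.rpow_nonneg hB.le _) hsp.le,
        Real.inv_rpow hB.le, ← Real.rpow_mul hB.le, ← Real.rpow_mul hs.le,
        mul_one_div, mul_one_div, div_self h1.ne', Real.rpow_one]
      exact inv_mul_cancel_left₀ (Real.rpow_pos_of_pos hB _).ne' s
    have hR : (n - 2) / (n - 1) * B⁻¹ + 1 / (n - 1) * ((n - 1) * c * s ^ (n - 1))
        = a + c * s ^ (n - 1) := by
      rw [hB_def]; field_simp
    rw [hL, hR] at hgm
    exact hgm
  have hlam' : lam * s ^ (n - 1) < -c * s ^ (n - 1) := by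
    apply mul_lt_mul_of_pos_right _ hsp
    rw [hc_def, ← neg_div]; exact hlam
  linarith
end

section
/- Let 0 < m < 1, n > m, λ > 0, and μ > 0. Then there exists c₀ > 0 such that for every c ∈ (0, c₀] and every t ∈ (0, 1] one has μ·c·t ≤ c^m·t^m − c^(m+1)·t^(m+1) − λ·c^n·t^n. -/
theorem stmt_19 (m n lam μ : ℝ) (hm1 : 0 < m) (hm2 : m < 1) (hnm : n > m)
    (hlam : 0 < lam) (hμ : 0 < μ) :
    ∃ c₀ > (0 : ℝ), ∀ c : ℝ, 0 < c → c ≤ c₀ → ∀ t : ℝ, 0 < t → t ≤ 1 →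
      μ * c * t ≤ c ^ m * t ^ m - c ^ (m + 1) * t ^ (m + 1) - lam * c ^ n * t ^ n := by
  have h1m : (0:ℝ) < 1 - m := by linarith
  have hnm' : (0:ℝ) < n - m := by linarith
  set a : ℝ := ((3*μ)⁻¹) ^ ((1-m)⁻¹) with ha
  set b : ℝ := ((3*lam)⁻¹) ^ ((n-m)⁻¹) with hb
  have ha0 : 0 < a := Real.rpow_pos_of_pos (by positivity) _
  have hb0 : 0 < b := Real.rpow_pos_of_pos (by positivity) _
  refine ⟨min (3⁻¹) (min a b), by positivity, ?_⟩
  intro c hc hcc t ht ht1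
  have hs : 0 < c * t := mul_pos hc ht
  have hsle : c * t ≤ min (3⁻¹) (min a b) := by
    calc c * t ≤ c * 1 := by nlinarith
    _ = c := mul_one c
    _ ≤ _ := hcc
  set s := c * t with hsdef
  -- rewrite products of rpow as rpow of product
  have e1 : c ^ m * t ^ m = s ^ m := (Real.mul_rpow hc.le ht.le).symm
  have e2 : c ^ (m+1) * t ^ (m+1) = s ^ (m+1) := (Real.mul_rpow hc.le ht.le).symm
  have e3 : c ^ n * t ^ n = s ^ n := (Real.mul_rpow hc.le ht.le).symm
  have emu : μ * c * t = μ * s := by rw [hsdef]; ring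
  rw [emu, e1, e2, mul_assoc, e3]
  -- decompose powers
  have d1 : s ^ (m+1) = s ^ m * s := by
    rw [Real.rpow_add hs, Real.rpow_one]
  have d2 : s ^ n = s ^ m * s ^ (n-m) := by
    rw [← Real.rpow_add hs]; ring_nf
  have d3 : μ * s = s ^ m * (μ * s ^ (1-m)) := by
    rw [show s ^ m * (μ * s ^ (1-m)) = μ * (s ^ m * s ^ (1-m)) by ring,
      ← Real.rpow_add hs]
    norm_num
  rw [d1, d2, d3]
  have hsm : (0:ℝ) < s ^ m := Real.rpow_pos_of_pos hs _
  have key : μ * s ^ (1-m) + s + lam * s ^ (n-m) ≤ 1 := by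
    have h3 : s ≤ 3⁻¹ := hsle.trans (min_le_left _ _)
    have hA : μ * s ^ (1-m) ≤ 3⁻¹ := by
      have hsa : s ≤ a := hsle.trans ((min_le_right _ _).trans (min_le_left _ _))
      have : s ^ (1-m) ≤ a ^ (1-m) := Real.rpow_le_rpow hs.le hsa h1m.le
      rw [ha, Real.rpow_inv_rpow (by positivity) h1m.ne'] at this
      calc μ * s ^ (1-m) ≤ μ * (3*μ)⁻¹ := by
            exact mul_le_mul_of_nonneg_left this hμ.le
        _ = 3⁻¹ := by field_simp
    have hB : lam * s ^ (n-m) ≤ 3⁻¹ := by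
      have hsb : s ≤ b := hsle.trans ((min_le_right _ _).trans (min_le_right _ _))
      have : s ^ (n-m) ≤ b ^ (n-m) := Real.rpow_le_rpow hs.le hsb hnm'.le
      rw [hb, Real.rpow_inv_rpow (by positivity) hnm'.ne'] at this
      calc lam * s ^ (n-m) ≤ lam * (3*lam)⁻¹ := by
            exact mul_le_mul_of_nonneg_left this hlam.le
        _ = 3⁻¹ := by field_simp
    linarith
  have : s ^ m * (μ * s ^ (1-m)) ≤ s ^ m * (1 - s - lam * s ^ (n-m)) := by
    apply mul_le_mul_of_nonneg_left _ hsm.le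
    linarith
  calc s ^ m * (μ * s ^ (1-m)) ≤ s ^ m * (1 - s - lam * s ^ (n-m)) := this
    _ = s ^ m - s ^ m * s - lam * (s ^ m * s ^ (n-m)) := by ring
end
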